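/- For any 2×2 game in which each player i ∈ {1,2} has a fixed reference point r_i ∈ ℝ (independent of the joint distribution μ), the set C_CPT of CPT correlated equilibria is a convex polytope: it equals the intersection of the simplex Δ³ ⊂ ℝ⁴ with finitely many closed half-spaces of ℝ⁴. In particular, C_CPT is convex. -/

import Mathlib

/-- The decision-weight form of the CPT value of the prospect `(p, z)` with
reference point `r`, value function `v`, probability weighting functions
`wp` (for gains) and `wm` (for losses), computed using a permutation `a`
of the indices ordering `z` decreasingly. -/
noncomputable def cptVal {t : ℕ} (wp wm v : ℝ → ℝ) (r : ℝ) (p z : Fin t → ℝ)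
    (a : Equiv.Perm (Fin t)) : ℝ :=
  ∑ j : Fin t,
    (if r ≤ z (a j) then
        wp (∑ k ∈ Finset.Iic j, p (a k)) - wp (∑ k ∈ Finset.Iio j, p (a k))
      else
        wm (∑ k ∈ Finset.Ici j, p (a k)) - wm (∑ k ∈ Finset.Ioi j, p (a k)))
      * v (z (a j))

/-- The CPT value `V^r(p,z)`, computed with a canonical permutation ordering `z`
decreasingly (the value is independent of the choice of such a permutation). -/
noncomputable def CPT {t : ℕ} (wp wm v : ℝ → ℝ) (r : ℝ) (p z : Fin t → ℝ) : ℝ :=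
  cptVal wp wm v r p z (Tuple.sort (fun j => -z j))

/-- The set of CPT correlated equilibria of the 2×2 game with payoffs `A` for
player 1 (the row player) and `B` for player 2 (the column player), where each
player `i` has fixed reference point `rᵢ`, value function `vᵢ`, and probability
weighting functions `wpᵢ, wmᵢ`: joint distributions `μ` on `Fin 2 × Fin 2` such
that, conditional on each recommendation played with positive probability, the
recommended strategy has CPT value at least that of any deviation. -/
noncomputable def CCPT2 (A B : Fin 2 × Fin 2 → ℝ) (wp1 wm1 wp2 wm2 v1 v2 : ℝ → ℝ)
    (r1 r2 : ℝ) : Set (Fin 2 × Fin 2 → ℝ) :=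
  {μ | ((∀ q, 0 ≤ μ q) ∧ ∑ q, μ q = 1) ∧
    (∀ j j' : Fin 2, 0 < ∑ k, μ (j, k) →
      CPT wp1 wm1 v1 r1 (fun k => μ (j, k) / ∑ k', μ (j, k')) (fun k => A (j', k))
        ≤ CPT wp1 wm1 v1 r1 (fun k => μ (j, k) / ∑ k', μ (j, k')) (fun k => A (j, k))) ∧
    (∀ k k' : Fin 2, 0 < ∑ j, μ (j, k) →
      CPT wp2 wm2 v2 r2 (fun j => μ (j, k) / ∑ j', μ (j', k)) (fun j => B (j, k'))
        ≤ CPT wp2 wm2 v2 r2 (fun j => μ (j, k) / ∑ j', μ (j', k)) (fun j => B (j, k)))}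

noncomputable def Vf (wp wm : ℝ → ℝ) (x v0 v1 : ℝ) : ℝ :=
  (if 0 ≤ v0 then wp x else 1 - wm (1 - x)) * v0 +
  (if 0 ≤ v1 then 1 - wp x else wm (1 - x)) * v1

lemma perm_two (a : Equiv.Perm (Fin 2)) : (a 0 = 0 ∧ a 1 = 1) ∨ (a 0 = 1 ∧ a 1 = 0) := by
  revert a; decide

lemma cptVal_two (wp wm v : ℝ → ℝ) (r : ℝ) (p z : Fin 2 → ℝ) (a : Equiv.Perm (Fin 2)) :
    cptVal wp wm v r p z a =
      (if r ≤ z (a 0) then wp (p (a 0)) - wp 0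
        else wm (p (a 0) + p (a 1)) - wm (p (a 1))) * v (z (a 0)) +
      (if r ≤ z (a 1) then wp (p (a 0) + p (a 1)) - wp (p (a 0))
        else wm (p (a 1)) - wm 0) * v (z (a 1)) := by
  have h1 : Finset.Iic (0 : Fin 2) = {0} := by decide
  have h2 : Finset.Iio (0 : Fin 2) = ∅ := by decide
  have h3 : Finset.Ici (0 : Fin 2) = {0, 1} := by decide
  have h4 : Finset.Ioi (0 : Fin 2) = {1} := by decide
  have h5 : Finset.Iic (1 : Fin 2) = {0, 1} := by decide
  have h6 : Finset.Iio (1 : Fin 2) = {0} := by decide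
  have h7 : Finset.Ici (1 : Fin 2) = {1} := by decide
  have h8 : Finset.Ioi (1 : Fin 2) = ∅ := by decide
  rw [cptVal, Fin.sum_univ_two, h1, h2, h3, h4, h5, h6, h7, h8]
  simp [Finset.sum_insert, Finset.sum_singleton]

lemma Vf_const (wp wm : ℝ → ℝ) (x v0 : ℝ) : Vf wp wm x v0 v0 = v0 := by
  unfold Vf; split_ifs <;> ring

lemma CPT_two (wp wm v : ℝ → ℝ) (r : ℝ)
    (hwp0 : wp 0 = 0) (hwp1 : wp 1 = 1) (hwm0 : wm 0 = 0) (hwm1 : wm 1 = 1)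
    (hv : StrictMono v) (hvr : v r = 0) (p z : Fin 2 → ℝ) (hp : p 0 + p 1 = 1) :
    CPT wp wm v r p z =
      if z 1 ≤ z 0 then Vf wp wm (p 0) (v (z 0)) (v (z 1))
      else Vf wp wm (p 1) (v (z 1)) (v (z 0)) := by
  have hiff : ∀ x, (r ≤ x) ↔ (0 ≤ v x) := by
    intro x; rw [← hvr]; exact hv.le_iff_le.symm
  set a := Tuple.sort (fun j => -z j) with ha
  have hsort : z (a 1) ≤ z (a 0) := by
    have h := Tuple.monotone_sort (fun j => -z j) (show (0:Fin 2) ≤ 1 by decide)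
    simpa using h
  have hp1 : p 1 = 1 - p 0 := by linarith
  have hp0 : p 0 = 1 - p 1 := by linarith
  rw [CPT, ← ha, cptVal_two]
  rcases perm_two a with ⟨h0, h1⟩ | ⟨h0, h1⟩
  · rw [h0, h1] at hsort ⊢
    rw [if_pos hsort, hp, hwp0, hwp1, hwm0, hwm1, Vf]
    rw [if_congr (hiff (z 0)) rfl rfl, if_congr (hiff (z 1)) rfl rfl, hp1]
    ring
  · rw [h0, h1] at hsort ⊢
    by_cases hz : z 1 ≤ z 0
    · -- then z 0 = z 1
      have hzz : z 0 = z 1 := le_antisymm hsort hz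
      rw [if_pos hz, hzz, Vf_const]
      rw [show p 1 + p 0 = 1 by linarith, hwp0, hwp1, hwm0, hwm1]
      simp only [hiff]
      split_ifs <;> ring
    · rw [if_neg hz, show p 1 + p 0 = 1 by linarith, hwp0, hwp1, hwm0, hwm1, Vf]
      rw [if_congr (hiff (z 1)) rfl rfl, if_congr (hiff (z 0)) rfl rfl, hp0]
      ring

noncomputable def ca (v0 v1 : ℝ) : ℝ :=
  if 0 ≤ v1 then v0 - v1 else if 0 ≤ v0 then v0 else 0
noncomputable def cb (v0 v1 : ℝ) : ℝ :=
  if 0 ≤ v1 then 0 else if 0 ≤ v0 then v1 else v1 - v0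
noncomputable def cc (v0 v1 : ℝ) : ℝ :=
  if 0 ≤ v1 then v1 else if 0 ≤ v0 then 0 else v0

lemma Vf_lin (wp wm : ℝ → ℝ) (x v0 v1 : ℝ) (h : v1 ≤ v0) :
    Vf wp wm x v0 v1 = ca v0 v1 * wp x + cb v0 v1 * wm (1 - x) + cc v0 v1 := by
  unfold Vf ca cb cc
  split_ifs with h1 h2 <;> try ring
  · linarith

lemma ca_nonneg (v0 v1 : ℝ) (h : v1 ≤ v0) : 0 ≤ ca v0 v1 := by
  unfold ca; split_ifs <;> linarith
lemma cb_nonpos (v0 v1 : ℝ) (h : v1 ≤ v0) : cb v0 v1 ≤ 0 := by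
  unfold cb; split_ifs <;> linarith

lemma pattern (v0 v1 w0 w1 : ℝ) (h : v1 ≤ v0) (h' : w1 ≤ w0) :
    (¬(0 < ca v0 v1 - ca w0 w1 ∧ 0 < cb v0 v1 - cb w0 w1 ∧ cc v0 v1 - cc w0 w1 < 0)) ∧
    (¬(ca v0 v1 - ca w0 w1 < 0 ∧ cb v0 v1 - cb w0 w1 < 0 ∧ 0 < cc v0 v1 - cc w0 w1)) := by
  unfold ca cb cc
  split_ifs <;> constructor <;> rintro ⟨p1, p2, p3⟩ <;> linarith

open Set

variable {wp wm : ℝ → ℝ}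

lemma w_nonneg (hwp : StrictMonoOn wp (Icc 0 1)) (hwp0 : wp 0 = 0) {u : ℝ}
    (hu : u ∈ Icc (0:ℝ) 1) : 0 ≤ wp u := by
  rcases eq_or_lt_of_le hu.1 with h | h
  · rw [← h, hwp0]
  · rw [← hwp0]; exact le_of_lt (hwp ⟨le_refl 0, zero_le_one⟩ hu h)

lemma w_pos (hwp : StrictMonoOn wp (Icc 0 1)) (hwp0 : wp 0 = 0) {u : ℝ}
    (hu : u ∈ Icc (0:ℝ) 1) (hu0 : 0 < u) : 0 < wp u := by
  rw [← hwp0]; exact hwp ⟨le_refl 0, zero_le_one⟩ hu hu0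

/-- the same-orientation ordered-connectedness lemma -/
lemma key1 (hwp : StrictMonoOn wp (Icc 0 1)) (hwp0 : wp 0 = 0)
    (hwm : StrictMonoOn wm (Icc 0 1)) (hwm0 : wm 0 = 0)
    (α β c : ℝ)
    (h1 : ¬(0 < α ∧ 0 < β ∧ c < 0)) (h2 : ¬(α < 0 ∧ β < 0 ∧ 0 < c))
    (u1 u u2 : ℝ) (hu1 : u1 ∈ Icc (0:ℝ) 1) (hu2 : u2 ∈ Icc (0:ℝ) 1)
    (h12 : u1 ≤ u) (h22 : u ≤ u2)
    (hD1 : 0 ≤ α * wp u1 + β * wm (1 - u1) + c)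
    (hD2 : 0 ≤ α * wp u2 + β * wm (1 - u2) + c) :
    0 ≤ α * wp u + β * wm (1 - u) + c := by
  have hu : u ∈ Icc (0:ℝ) 1 := ⟨le_trans hu1.1 h12, le_trans h22 hu2.2⟩
  have hu1' : (1 - u1) ∈ Icc (0:ℝ) 1 := ⟨by linarith [hu1.2], by linarith [hu1.1]⟩
  have hu2' : (1 - u2) ∈ Icc (0:ℝ) 1 := ⟨by linarith [hu2.2], by linarith [hu2.1]⟩
  have hu' : (1 - u) ∈ Icc (0:ℝ) 1 := ⟨by linarith [hu.2], by linarith [hu.1]⟩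
  rcases le_or_gt 0 α with hα | hα <;> rcases le_or_gt 0 β with hβ | hβ
  · -- α ≥ 0, β ≥ 0
    rcases le_or_gt 0 c with hc | hc
    · have := mul_nonneg hα (w_nonneg hwp hwp0 hu)
      have := mul_nonneg hβ (w_nonneg hwm hwm0 hu')
      linarith
    · -- c < 0 : then not both α, β > 0; boundary cases are monotone
      rcases eq_or_lt_of_le hα with hα0 | hα0
      · -- α = 0 : antitone in u (β ≥ 0, wm (1-u) antitone)
        have hw : wm (1 - u2) ≤ wm (1 - u) :=
          hwm.monotoneOn hu2' hu' (by linarith)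
        have := mul_le_mul_of_nonneg_left hw hβ
        rw [← hα0] at hD2 ⊢
        linarith
      · rcases eq_or_lt_of_le hβ with hβ0 | hβ0
        · -- β = 0 : monotone in u
          have hw : wp u1 ≤ wp u := hwp.monotoneOn hu1 hu h12
          have := mul_le_mul_of_nonneg_left hw hα
          rw [← hβ0] at hD1 ⊢
          linarith
        · exact absurd ⟨hα0, hβ0, hc⟩ h1
  · -- α ≥ 0, β ≤ 0 : monotone
    have hw : wp u1 ≤ wp u := hwp.monotoneOn hu1 hu h12
    have hw' : wm (1 - u) ≤ wm (1 - u1) := hwm.monotoneOn hu' hu1' (by linarith)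
    have := mul_le_mul_of_nonneg_left hw hα
    have := mul_le_mul_of_nonpos_left hw' hβ.le
    linarith
  · -- α ≤ 0, β ≥ 0 : antitone
    have hw : wp u ≤ wp u2 := hwp.monotoneOn hu hu2 h22
    have hw' : wm (1 - u2) ≤ wm (1 - u) := hwm.monotoneOn hu2' hu' (by linarith)
    have := mul_le_mul_of_nonpos_left hw hα.le
    have := mul_le_mul_of_nonneg_left hw' hβ
    linarith
  · -- α < 0, β < 0
    have hc : c ≤ 0 := by
      by_contra hc; exact h2 ⟨hα, hβ, lt_of_not_ge hc⟩
    -- all terms at u1 and u2 are nonpositive, so they vanish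
    have t1 : α * wp u1 ≤ 0 := mul_nonpos_of_nonpos_of_nonneg hα.le (w_nonneg hwp hwp0 hu1)
    have t2 : β * wm (1 - u1) ≤ 0 := mul_nonpos_of_nonpos_of_nonneg hβ.le (w_nonneg hwm hwm0 hu1')
    have t3 : α * wp u2 ≤ 0 := mul_nonpos_of_nonpos_of_nonneg hα.le (w_nonneg hwp hwp0 hu2)
    have t4 : β * wm (1 - u2) ≤ 0 := mul_nonpos_of_nonpos_of_nonneg hβ.le (w_nonneg hwm hwm0 hu2')
    have e3 : α * wp u2 = 0 := by linarith
    have e2 : β * wm (1 - u1) = 0 := by linarith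
    have hc0 : c = 0 := by linarith
    -- wp u2 = 0 hence u2 = 0 hence u = 0
    have hwpu2 : wp u2 = 0 := by
      rcases mul_eq_zero.mp e3 with h | h
      · exact absurd h (ne_of_lt hα)
      · exact h
    have hu20 : u2 = 0 := by
      by_contra hne
      have : 0 < wp u2 := w_pos hwp hwp0 hu2 (lt_of_le_of_ne hu2.1 (Ne.symm hne))
      linarith
    have hwmu1 : wm (1 - u1) = 0 := by
      rcases mul_eq_zero.mp e2 with h | h
      · exact absurd h (ne_of_lt hβ)
      · exact h
    have hu11 : u1 = 1 := by
      by_contra hne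
      have : 0 < wm (1 - u1) := w_pos hwm hwm0 hu1' (by
        rcases lt_or_eq_of_le hu1.2 with h | h
        · linarith
        · exact absurd h hne)
      linarith
    have : u = 0 := le_antisymm (hu20 ▸ h22) hu.1
    have : u = 1 := le_antisymm hu.2 (hu11 ▸ h12)
    linarith

/-- cross-orientation monotonicity -/
lemma cross_mono (hwp : StrictMonoOn wp (Icc 0 1)) (hwm : StrictMonoOn wm (Icc 0 1))
    (a1 b1 c1 a2 b2 c2 : ℝ) (ha1 : 0 ≤ a1) (hb1 : b1 ≤ 0) (ha2 : 0 ≤ a2) (hb2 : b2 ≤ 0)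
    (t s : ℝ) (ht : t ∈ Icc (0:ℝ) 1) (hs : s ∈ Icc (0:ℝ) 1) (hts : t ≤ s) :
    (a1 * wp t + b1 * wm (1 - t) + c1) - (a2 * wp (1 - t) + b2 * wm t + c2) ≤
    (a1 * wp s + b1 * wm (1 - s) + c1) - (a2 * wp (1 - s) + b2 * wm s + c2) := by
  have ht' : (1 - t) ∈ Icc (0:ℝ) 1 := ⟨by linarith [ht.2], by linarith [ht.1]⟩
  have hs' : (1 - s) ∈ Icc (0:ℝ) 1 := ⟨by linarith [hs.2], by linarith [hs.1]⟩
  have w1 : wp t ≤ wp s := hwp.monotoneOn ht hs hts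
  have w2 : wm (1 - s) ≤ wm (1 - t) := hwm.monotoneOn hs' ht' (by linarith)
  have w3 : wp (1 - s) ≤ wp (1 - t) := hwp.monotoneOn hs' ht' (by linarith)
  have w4 : wm t ≤ wm s := hwm.monotoneOn ht hs hts
  have := mul_le_mul_of_nonneg_left w1 ha1
  have := mul_le_mul_of_nonpos_left w2 hb1
  have := mul_le_mul_of_nonneg_left w3 ha2
  have := mul_le_mul_of_nonpos_left w4 hb2
  linarith

noncomputable def pfun (u : ℝ) : Fin 2 → ℝ := fun k => if k = 0 then u else 1 - u

lemma pfun0 (u : ℝ) : pfun u 0 = u := by simp [pfun]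
lemma pfun1 (u : ℝ) : pfun u 1 = 1 - u := by
  simp [pfun, show (1 : Fin 2) ≠ 0 by decide]

variable {wp wm : ℝ → ℝ}

lemma Vf_contOn (hwp : ContinuousOn wp (Icc 0 1)) (hwm : ContinuousOn wm (Icc 0 1))
    (v0 v1 : ℝ) : ContinuousOn (fun u => Vf wp wm u v0 v1) (Icc (0:ℝ) 1) := by
  have hmap : MapsTo (fun u : ℝ => 1 - u) (Icc (0:ℝ) 1) (Icc (0:ℝ) 1) := by
    intro x hx
    simp only [mem_Icc] at hx ⊢
    constructor <;> linarith [hx.1, hx.2]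
  have h1 : ContinuousOn (fun u : ℝ => wm (1 - u)) (Icc (0:ℝ) 1) :=
    hwm.comp (continuousOn_const.sub continuousOn_id) hmap
  unfold Vf
  apply ContinuousOn.add <;> apply ContinuousOn.mul
  · split_ifs
    exacts [hwp, continuousOn_const.sub h1]
  · exact continuousOn_const
  · split_ifs
    exacts [continuousOn_const.sub hwp, h1]
  · exact continuousOn_const

lemma Vf_contOn' (hwp : ContinuousOn wp (Icc 0 1)) (hwm : ContinuousOn wm (Icc 0 1))
    (v0 v1 : ℝ) : ContinuousOn (fun u => Vf wp wm (1 - u) v0 v1) (Icc (0:ℝ) 1) := by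
  have hmap : MapsTo (fun u : ℝ => 1 - u) (Icc (0:ℝ) 1) (Icc (0:ℝ) 1) := by
    intro x hx
    simp only [mem_Icc] at hx ⊢
    constructor <;> linarith [hx.1, hx.2]
  exact (Vf_contOn hwp hwm v0 v1).comp (continuousOn_const.sub continuousOn_id) hmap

lemma halfspaces (wp wm v : ℝ → ℝ) (r : ℝ)
    (hwpc : ContinuousOn wp (Icc 0 1)) (hwps : StrictMonoOn wp (Icc 0 1))
    (hwp0 : wp 0 = 0) (hwp1 : wp 1 = 1)
    (hwmc : ContinuousOn wm (Icc 0 1)) (hwms : StrictMonoOn wm (Icc 0 1))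
    (hwm0 : wm 0 = 0) (hwm1 : wm 1 = 1)
    (hv : StrictMono v) (hvr : v r = 0) (zr zd : Fin 2 → ℝ) :
    ∃ α β : ℝ, ∀ x y : ℝ, 0 ≤ x → 0 ≤ y →
      ((0 < x + y →
          CPT wp wm v r (fun k => (if k = 0 then x else y) / (x + y)) zd
            ≤ CPT wp wm v r (fun k => (if k = 0 then x else y) / (x + y)) zr)
        ↔ (α * (x + y) - x ≤ 0 ∧ x - β * (x + y) ≤ 0)) := by
  classical
  set D : ℝ → ℝ := fun u =>
    CPT wp wm v r (pfun u) zr - CPT wp wm v r (pfun u) zd with hD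
  have hpsum : ∀ u : ℝ, pfun u 0 + pfun u 1 = 1 := by
    intro u; rw [pfun0, pfun1]; ring
  have hDz : ∀ (u : ℝ) (z : Fin 2 → ℝ), CPT wp wm v r (pfun u) z =
      if z 1 ≤ z 0 then Vf wp wm u (v (z 0)) (v (z 1))
      else Vf wp wm (1 - u) (v (z 1)) (v (z 0)) := by
    intro u z
    rw [CPT_two wp wm v r hwp0 hwp1 hwm0 hwm1 hv hvr (pfun u) z (hpsum u), pfun0, pfun1]
  -- ordered connectedness
  have hOrd : ∀ u1 u u2 : ℝ, u1 ∈ Icc (0:ℝ) 1 → u2 ∈ Icc (0:ℝ) 1 → u1 ≤ u → u ≤ u2 →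
      0 ≤ D u1 → 0 ≤ D u2 → 0 ≤ D u := by
    intro u1 u u2 hu1 hu2 h12 h22 hD1 hD2
    have hu : u ∈ Icc (0:ℝ) 1 := ⟨le_trans hu1.1 h12, le_trans h22 hu2.2⟩
    by_cases hr : zr 1 ≤ zr 0 <;> by_cases hd : zd 1 ≤ zd 0 <;>
      simp only [hD, hDz, if_pos, if_neg, hr, hd, if_true, if_false] at hD1 hD2 ⊢
    · -- both identity orientation
      have sR : v (zr 1) ≤ v (zr 0) := hv.monotone hr
      have sD : v (zd 1) ≤ v (zd 0) := hv.monotone hd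
      rw [Vf_lin wp wm _ _ _ sR, Vf_lin wp wm _ _ _ sD] at hD1 hD2 ⊢
      have hp := pattern _ _ _ _ sR sD
      have hk := key1 hwps hwp0 hwms hwm0
        (ca (v (zr 0)) (v (zr 1)) - ca (v (zd 0)) (v (zd 1)))
        (cb (v (zr 0)) (v (zr 1)) - cb (v (zd 0)) (v (zd 1)))
        (cc (v (zr 0)) (v (zr 1)) - cc (v (zd 0)) (v (zd 1)))
        hp.1 hp.2 u1 u u2 hu1 hu2 h12 h22 (by linarith) (by linarith)
      linarith
    · -- rec identity, dev swapped
      have sR : v (zr 1) ≤ v (zr 0) := hv.monotone hr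
      have sD : v (zd 0) ≤ v (zd 1) := hv.monotone (le_of_not_ge hd)
      rw [Vf_lin wp wm _ _ _ sR, Vf_lin wp wm _ _ _ sD] at hD1 hD2 ⊢
      simp only [sub_sub_cancel] at hD1 hD2 ⊢
      have hk := cross_mono hwps hwms
        (ca (v (zr 0)) (v (zr 1))) (cb (v (zr 0)) (v (zr 1))) (cc (v (zr 0)) (v (zr 1)))
        (ca (v (zd 1)) (v (zd 0))) (cb (v (zd 1)) (v (zd 0))) (cc (v (zd 1)) (v (zd 0)))
        (ca_nonneg _ _ sR) (cb_nonpos _ _ sR) (ca_nonneg _ _ sD) (cb_nonpos _ _ sD)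
        u1 u hu1 hu h12
      linarith
    · -- rec swapped, dev identity
      have sR : v (zr 0) ≤ v (zr 1) := hv.monotone (le_of_not_ge hr)
      have sD : v (zd 1) ≤ v (zd 0) := hv.monotone hd
      rw [Vf_lin wp wm _ _ _ sR, Vf_lin wp wm _ _ _ sD] at hD1 hD2 ⊢
      simp only [sub_sub_cancel] at hD1 hD2 ⊢
      have hk := cross_mono hwps hwms
        (ca (v (zd 0)) (v (zd 1))) (cb (v (zd 0)) (v (zd 1))) (cc (v (zd 0)) (v (zd 1)))
        (ca (v (zr 1)) (v (zr 0))) (cb (v (zr 1)) (v (zr 0))) (cc (v (zr 1)) (v (zr 0)))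
        (ca_nonneg _ _ sD) (cb_nonpos _ _ sD) (ca_nonneg _ _ sR) (cb_nonpos _ _ sR)
        u u2 hu hu2 h22
      linarith
    · -- both swapped
      have sR : v (zr 0) ≤ v (zr 1) := hv.monotone (le_of_not_ge hr)
      have sD : v (zd 0) ≤ v (zd 1) := hv.monotone (le_of_not_ge hd)
      rw [Vf_lin wp wm _ _ _ sR, Vf_lin wp wm _ _ _ sD] at hD1 hD2 ⊢
      have hp := pattern _ _ _ _ sR sD
      have hk := key1 hwps hwp0 hwms hwm0
        (ca (v (zr 1)) (v (zr 0)) - ca (v (zd 1)) (v (zd 0)))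
        (cb (v (zr 1)) (v (zr 0)) - cb (v (zd 1)) (v (zd 0)))
        (cc (v (zr 1)) (v (zr 0)) - cc (v (zd 1)) (v (zd 0)))
        hp.1 hp.2 (1 - u2) (1 - u) (1 - u1)
        ⟨by linarith [hu2.2], by linarith [hu2.1]⟩
        ⟨by linarith [hu1.2], by linarith [hu1.1]⟩
        (by linarith) (by linarith) (by linarith) (by linarith)
      linarith
  -- continuity
  have hCz : ∀ z : Fin 2 → ℝ,
      ContinuousOn (fun u => CPT wp wm v r (pfun u) z) (Icc (0:ℝ) 1) := by
    intro z
    by_cases hz : z 1 ≤ z 0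
    · exact (Vf_contOn hwpc hwmc (v (z 0)) (v (z 1))).congr
        (fun u hu => by rw [hDz u z, if_pos hz])
    · exact (Vf_contOn' hwpc hwmc (v (z 1)) (v (z 0))).congr
        (fun u hu => by rw [hDz u z, if_neg hz])
  have hDc : ContinuousOn D (Icc (0:ℝ) 1) := (hCz zr).sub (hCz zd)
  set I : Set ℝ := Icc (0:ℝ) 1 ∩ D ⁻¹' (Ici 0) with hI
  have hIcl : IsClosed I :=
    hDc.preimage_isClosed_of_isClosed isClosed_Icc isClosed_Ici
  have hIsub : I ⊆ Icc (0:ℝ) 1 := inter_subset_left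
  by_cases hne : I.Nonempty
  · -- nonempty case
    have hbdd : BddBelow I := BddBelow.mono hIsub (bddBelow_Icc)
    have hbdd' : BddAbove I := BddAbove.mono hIsub (bddAbove_Icc)
    set α := sInf I with hα
    set β := sSup I with hβ
    have hαI : α ∈ I := hIcl.csInf_mem hne hbdd
    have hβI : β ∈ I := hIcl.csSup_mem hne hbdd'
    have hIeq : I = Icc α β := by
      apply Subset.antisymm
      · intro u hu
        exact ⟨csInf_le hbdd hu, le_csSup hbdd' hu⟩
      · intro u hu
        refine ⟨⟨le_trans (hIsub hαI).1 hu.1, le_trans hu.2 (hIsub hβI).2⟩, ?_⟩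
        exact hOrd α u β (hIsub hαI) (hIsub hβI) hu.1 hu.2 hαI.2 hβI.2
    refine ⟨α, β, ?_⟩
    intro x y hx hy
    constructor
    · intro hcon
      by_cases hs : 0 < x + y
      · have hfeq : (fun k : Fin 2 => (if k = 0 then x else y) / (x + y)) =
            pfun (x / (x + y)) := by
          funext k
          fin_cases k
          · simp [pfun]
          · simp [pfun, show (1 : Fin 2) ≠ 0 by decide]
            rw [eq_sub_iff_add_eq, ← add_div, add_comm y x, div_self (ne_of_gt hs)]
        rw [hfeq] at hcon
        have hu : x / (x + y) ∈ Icc (0:ℝ) 1 :=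
          ⟨div_nonneg hx (le_of_lt hs), (div_le_one hs).mpr (by linarith)⟩
        have hmem : x / (x + y) ∈ I := ⟨hu, by
          simp only [mem_preimage, mem_Ici, hD]
          linarith [hcon hs]⟩
        rw [hIeq] at hmem
        constructor
        · have := hmem.1
          rw [le_div_iff₀ hs] at this
          linarith
        · have := hmem.2
          rw [div_le_iff₀ hs] at this
          linarith
      · have hx0 : x = 0 := le_antisymm (by linarith) hx
        have hy0 : y = 0 := le_antisymm (by linarith) hy
        rw [hx0, hy0]; norm_num
    · rintro ⟨hl1, hl2⟩ hs
      have hu : x / (x + y) ∈ Icc α β := by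
        constructor
        · rw [le_div_iff₀ hs]; linarith
        · rw [div_le_iff₀ hs]; linarith
      rw [← hIeq] at hu
      have hfeq : (fun k : Fin 2 => (if k = 0 then x else y) / (x + y)) =
          pfun (x / (x + y)) := by
        funext k
        fin_cases k
        · simp [pfun]
        · simp [pfun, show (1 : Fin 2) ≠ 0 by decide]
          rw [eq_sub_iff_add_eq, ← add_div, add_comm y x, div_self (ne_of_gt hs)]
      rw [hfeq]
      have := hu.2
      simp only [mem_preimage, mem_Ici, hD] at this
      linarith
  · -- empty case
    refine ⟨1, 0, ?_⟩
    intro x y hx hy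
    constructor
    · intro hcon
      by_cases hs : 0 < x + y
      · exfalso
        have hfeq : (fun k : Fin 2 => (if k = 0 then x else y) / (x + y)) =
            pfun (x / (x + y)) := by
          funext k
          fin_cases k
          · simp [pfun]
          · simp [pfun, show (1 : Fin 2) ≠ 0 by decide]
            rw [eq_sub_iff_add_eq, ← add_div, add_comm y x, div_self (ne_of_gt hs)]
        rw [hfeq] at hcon
        have hu : x / (x + y) ∈ Icc (0:ℝ) 1 :=
          ⟨div_nonneg hx (le_of_lt hs), (div_le_one hs).mpr (by linarith)⟩
        exact hne ⟨x / (x + y), hu, by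
          simp only [mem_preimage, mem_Ici, hD]
          linarith [hcon hs]⟩
      · have hx0 : x = 0 := le_antisymm (by linarith) hx
        have hy0 : y = 0 := le_antisymm (by linarith) hy
        rw [hx0, hy0]; norm_num
    · rintro ⟨hl1, hl2⟩ hs
      exfalso
      have hx0 : x ≤ 0 := by linarith
      have hy0 : y ≤ 0 := by linarith
      linarith

lemma simplex_convex : Convex ℝ {μ : Fin 2 × Fin 2 → ℝ | (∀ q, 0 ≤ μ q) ∧ ∑ q, μ q = 1} := by
  intro μ hμ ν hν a b ha hb hab
  constructor
  · intro q
    exact add_nonneg (mul_nonneg ha (hμ.1 q)) (mul_nonneg hb (hν.1 q))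
  · simp only [Pi.add_apply, Pi.smul_apply, smul_eq_mul, Finset.sum_add_distrib,
      ← Finset.mul_sum, hμ.2, hν.2, mul_one]
    exact hab

lemma halfspace_convex (c : Fin 2 × Fin 2 → ℝ) (d : ℝ) :
    Convex ℝ {μ : Fin 2 × Fin 2 → ℝ | ∑ q, c q * μ q ≤ d} := by
  intro μ hμ ν hν a b ha hb hab
  simp only [mem_setOf_eq] at hμ hν ⊢
  have hexp : ∑ q, c q * (a • μ + b • ν) q
      = a * ∑ q, c q * μ q + b * ∑ q, c q * ν q := by
    rw [Finset.mul_sum, Finset.mul_sum, ← Finset.sum_add_distrib]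
    apply Finset.sum_congr rfl
    intros; simp only [Pi.add_apply, Pi.smul_apply, smul_eq_mul]; ring
  rw [hexp]
  have h1 := mul_le_mul_of_nonneg_left hμ ha
  have h2 := mul_le_mul_of_nonneg_left hν hb
  have h3 : a * d + b * d = d := by rw [← add_mul, hab, one_mul]
  linarith


/-- for any 2×2 game in which each player has a fixed reference point
(independent of the joint distribution), the set of CPT correlated equilibria is a
convex polytope: it is the intersection of the simplex `Δ³` with finitely many
closed half-spaces of `ℝ⁴`; in particular it is convex. -/
theorem ccpt_2x2_convex_polytope (A B : Fin 2 × Fin 2 → ℝ)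
    (wp1 wm1 wp2 wm2 v1 v2 : ℝ → ℝ) (r1 r2 : ℝ)
    (hwp1 : ContinuousOn wp1 (Set.Icc 0 1) ∧ StrictMonoOn wp1 (Set.Icc 0 1)
      ∧ wp1 0 = 0 ∧ wp1 1 = 1)
    (hwm1 : ContinuousOn wm1 (Set.Icc 0 1) ∧ StrictMonoOn wm1 (Set.Icc 0 1)
      ∧ wm1 0 = 0 ∧ wm1 1 = 1)
    (hwp2 : ContinuousOn wp2 (Set.Icc 0 1) ∧ StrictMonoOn wp2 (Set.Icc 0 1)
      ∧ wp2 0 = 0 ∧ wp2 1 = 1)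
    (hwm2 : ContinuousOn wm2 (Set.Icc 0 1) ∧ StrictMonoOn wm2 (Set.Icc 0 1)
      ∧ wm2 0 = 0 ∧ wm2 1 = 1)
    (hv1 : StrictMono v1 ∧ Continuous v1 ∧ v1 r1 = 0)
    (hv2 : StrictMono v2 ∧ Continuous v2 ∧ v2 r2 = 0) :
    (∃ (m : ℕ) (c : Fin m → (Fin 2 × Fin 2 → ℝ)) (d : Fin m → ℝ),
      CCPT2 A B wp1 wm1 wp2 wm2 v1 v2 r1 r2
        = {μ : Fin 2 × Fin 2 → ℝ | (∀ q, 0 ≤ μ q) ∧ ∑ q, μ q = 1}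
            ∩ ⋂ l : Fin m, {μ : Fin 2 × Fin 2 → ℝ | ∑ q, c l q * μ q ≤ d l})
    ∧ Convex ℝ (CCPT2 A B wp1 wm1 wp2 wm2 v1 v2 r1 r2) := by
  classical
  obtain ⟨hwp1c, hwp1s, hwp10, hwp11⟩ := hwp1
  obtain ⟨hwm1c, hwm1s, hwm10, hwm11⟩ := hwm1
  obtain ⟨hwp2c, hwp2s, hwp20, hwp21⟩ := hwp2
  obtain ⟨hwm2c, hwm2s, hwm20, hwm21⟩ := hwm2
  obtain ⟨hv1s, hv1c, hv1r⟩ := hv1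
  obtain ⟨hv2s, hv2c, hv2r⟩ := hv2
  obtain ⟨α1, β1, h1⟩ := halfspaces wp1 wm1 v1 r1 hwp1c hwp1s hwp10 hwp11
    hwm1c hwm1s hwm10 hwm11 hv1s hv1r (fun k => A (0, k)) (fun k => A (1, k))
  obtain ⟨α2, β2, h2⟩ := halfspaces wp1 wm1 v1 r1 hwp1c hwp1s hwp10 hwp11
    hwm1c hwm1s hwm10 hwm11 hv1s hv1r (fun k => A (1, k)) (fun k => A (0, k))
  obtain ⟨α3, β3, h3⟩ := halfspaces wp2 wm2 v2 r2 hwp2c hwp2s hwp20 hwp21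
    hwm2c hwm2s hwm20 hwm21 hv2s hv2r (fun j => B (j, 0)) (fun j => B (j, 1))
  obtain ⟨α4, β4, h4⟩ := halfspaces wp2 wm2 v2 r2 hwp2c hwp2s hwp20 hwp21
    hwm2c hwm2s hwm20 hwm21 hv2s hv2r (fun j => B (j, 1)) (fun j => B (j, 0))
  -- the 8 half-space coefficient vectors
  set c : Fin 8 → (Fin 2 × Fin 2 → ℝ) := fun l q =>
    if l = 0 then (if q = (0,0) then α1 - 1 else if q = (0,1) then α1 else 0)
    else if l = 1 then (if q = (0,0) then 1 - β1 else if q = (0,1) then -β1 else 0)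
    else if l = 2 then (if q = (1,0) then α2 - 1 else if q = (1,1) then α2 else 0)
    else if l = 3 then (if q = (1,0) then 1 - β2 else if q = (1,1) then -β2 else 0)
    else if l = 4 then (if q = (0,0) then α3 - 1 else if q = (1,0) then α3 else 0)
    else if l = 5 then (if q = (0,0) then 1 - β3 else if q = (1,0) then -β3 else 0)
    else if l = 6 then (if q = (0,1) then α4 - 1 else if q = (1,1) then α4 else 0)
    else (if q = (0,1) then 1 - β4 else if q = (1,1) then -β4 else 0) with hc
  -- sum evaluations
  have S0 : ∀ μ : Fin 2 × Fin 2 → ℝ, ∑ q, c 0 q * μ q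
      = α1 * (μ (0,0) + μ (0,1)) - μ (0,0) := by
    intro μ; simp [hc, Fintype.sum_prod_type, Fin.sum_univ_two, Prod.ext_iff]; ring
  have S1 : ∀ μ : Fin 2 × Fin 2 → ℝ, ∑ q, c 1 q * μ q
      = μ (0,0) - β1 * (μ (0,0) + μ (0,1)) := by
    intro μ; simp [hc, Fintype.sum_prod_type, Fin.sum_univ_two, Prod.ext_iff]; ring
  have S2 : ∀ μ : Fin 2 × Fin 2 → ℝ, ∑ q, c 2 q * μ q
      = α2 * (μ (1,0) + μ (1,1)) - μ (1,0) := by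
    intro μ; simp [hc, Fintype.sum_prod_type, Fin.sum_univ_two, Prod.ext_iff]; ring
  have S3 : ∀ μ : Fin 2 × Fin 2 → ℝ, ∑ q, c 3 q * μ q
      = μ (1,0) - β2 * (μ (1,0) + μ (1,1)) := by
    intro μ; simp [hc, Fintype.sum_prod_type, Fin.sum_univ_two, Prod.ext_iff]; ring
  have S4 : ∀ μ : Fin 2 × Fin 2 → ℝ, ∑ q, c 4 q * μ q
      = α3 * (μ (0,0) + μ (1,0)) - μ (0,0) := by
    intro μ; simp [hc, Fintype.sum_prod_type, Fin.sum_univ_two, Prod.ext_iff]; ring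
  have S5 : ∀ μ : Fin 2 × Fin 2 → ℝ, ∑ q, c 5 q * μ q
      = μ (0,0) - β3 * (μ (0,0) + μ (1,0)) := by
    intro μ; simp [hc, Fintype.sum_prod_type, Fin.sum_univ_two, Prod.ext_iff]; ring
  have S6 : ∀ μ : Fin 2 × Fin 2 → ℝ, ∑ q, c 6 q * μ q
      = α4 * (μ (0,1) + μ (1,1)) - μ (0,1) := by
    intro μ; simp [hc, Fintype.sum_prod_type, Fin.sum_univ_two, Prod.ext_iff]; ring
  have S7 : ∀ μ : Fin 2 × Fin 2 → ℝ, ∑ q, c 7 q * μ q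
      = μ (0,1) - β4 * (μ (0,1) + μ (1,1)) := by
    intro μ; simp [hc, Fintype.sum_prod_type, Fin.sum_univ_two, Prod.ext_iff]; ring
  -- function rewrites
  have fr1 : ∀ (μ : Fin 2 × Fin 2 → ℝ) (j : Fin 2),
      (fun k => μ (j, k) / ∑ k', μ (j, k'))
        = (fun k => (if k = (0:Fin 2) then μ (j,0) else μ (j,1)) / (μ (j,0) + μ (j,1))) := by
    intro μ j; funext k; fin_cases k <;> simp [Fin.sum_univ_two]
  have fr2 : ∀ (μ : Fin 2 × Fin 2 → ℝ) (k : Fin 2),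
      (fun j => μ (j, k) / ∑ j', μ (j', k))
        = (fun j => (if j = (0:Fin 2) then μ (0,k) else μ (1,k)) / (μ (0,k) + μ (1,k))) := by
    intro μ k; funext j; fin_cases j <;> simp [Fin.sum_univ_two]
  have sr1 : ∀ (μ : Fin 2 × Fin 2 → ℝ) (j : Fin 2),
      (∑ k, μ (j, k)) = μ (j,0) + μ (j,1) := fun μ j => Fin.sum_univ_two _
  have sr2 : ∀ (μ : Fin 2 × Fin 2 → ℝ) (k : Fin 2),
      (∑ j, μ (j, k)) = μ (0,k) + μ (1,k) := fun μ k => Fin.sum_univ_two _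
  have hset : CCPT2 A B wp1 wm1 wp2 wm2 v1 v2 r1 r2
      = {μ : Fin 2 × Fin 2 → ℝ | (∀ q, 0 ≤ μ q) ∧ ∑ q, μ q = 1}
          ∩ ⋂ l : Fin 8, {μ : Fin 2 × Fin 2 → ℝ | ∑ q, c l q * μ q ≤ 0} := by
    ext μ
    simp only [CCPT2, mem_setOf_eq, mem_inter_iff, mem_iInter]
    constructor
    · rintro ⟨hsim, hP1, hP2⟩
      refine ⟨hsim, ?_⟩
      have hc1 := hP1 0 1
      rw [fr1 μ 0, sr1 μ 0] at hc1
      have hi1 := (h1 _ _ (hsim.1 _) (hsim.1 _)).mp hc1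
      have hc2 := hP1 1 0
      rw [fr1 μ 1, sr1 μ 1] at hc2
      have hi2 := (h2 _ _ (hsim.1 _) (hsim.1 _)).mp hc2
      have hc3 := hP2 0 1
      rw [fr2 μ 0, sr2 μ 0] at hc3
      have hi3 := (h3 _ _ (hsim.1 _) (hsim.1 _)).mp hc3
      have hc4 := hP2 1 0
      rw [fr2 μ 1, sr2 μ 1] at hc4
      have hi4 := (h4 _ _ (hsim.1 _) (hsim.1 _)).mp hc4
      intro l
      fin_cases l
      · show ∑ q, c 0 q * μ q ≤ (0:ℝ); rw [S0]; linarith [hi1.1]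
      · show ∑ q, c 1 q * μ q ≤ (0:ℝ); rw [S1]; linarith [hi1.2]
      · show ∑ q, c 2 q * μ q ≤ (0:ℝ); rw [S2]; linarith [hi2.1]
      · show ∑ q, c 3 q * μ q ≤ (0:ℝ); rw [S3]; linarith [hi2.2]
      · show ∑ q, c 4 q * μ q ≤ (0:ℝ); rw [S4]; linarith [hi3.1]
      · show ∑ q, c 5 q * μ q ≤ (0:ℝ); rw [S5]; linarith [hi3.2]
      · show ∑ q, c 6 q * μ q ≤ (0:ℝ); rw [S6]; linarith [hi4.1]
      · show ∑ q, c 7 q * μ q ≤ (0:ℝ); rw [S7]; linarith [hi4.2]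
    · rintro ⟨hsim, hl⟩
      have g0 := hl 0; rw [S0] at g0
      have g1 := hl 1; rw [S1] at g1
      have g2 := hl 2; rw [S2] at g2
      have g3 := hl 3; rw [S3] at g3
      have g4 := hl 4; rw [S4] at g4
      have g5 := hl 5; rw [S5] at g5
      have g6 := hl 6; rw [S6] at g6
      have g7 := hl 7; rw [S7] at g7
      refine ⟨hsim, ?_, ?_⟩
      · intro j j' hs
        have hcase : ∀ i : Fin 2, i = 0 ∨ i = 1 := by decide
        rcases hcase j with rfl | rfl <;> rcases hcase j' with rfl | rfl
        · exact le_rfl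
        · rw [sr1 μ 0] at hs
          rw [fr1 μ 0]
          exact (h1 _ _ (hsim.1 _) (hsim.1 _)).mpr ⟨by linarith, by linarith⟩ hs
        · rw [sr1 μ 1] at hs
          rw [fr1 μ 1]
          exact (h2 _ _ (hsim.1 _) (hsim.1 _)).mpr ⟨by linarith, by linarith⟩ hs
        · exact le_rfl
      · intro k k' hs
        have hcase : ∀ i : Fin 2, i = 0 ∨ i = 1 := by decide
        rcases hcase k with rfl | rfl <;> rcases hcase k' with rfl | rfl
        · exact le_rfl
        · rw [sr2 μ 0] at hs
          rw [fr2 μ 0]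
          exact (h3 _ _ (hsim.1 _) (hsim.1 _)).mpr ⟨by linarith, by linarith⟩ hs
        · rw [sr2 μ 1] at hs
          rw [fr2 μ 1]
          exact (h4 _ _ (hsim.1 _) (hsim.1 _)).mpr ⟨by linarith, by linarith⟩ hs
        · exact le_rfl
  refine ⟨⟨8, c, fun _ => 0, hset⟩, ?_⟩
  rw [hset]
  exact simplex_convex.inter (convex_iInter fun l => halfspace_convex (c l) 0)
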